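/- Greedy optimality for the fully relaxed stationary search problem: with a stationary target, multiplicative search updates b(x) ← (1-q(x))·b(x), and no reachability constraint (any vertex may be searched at each step), the schedule that at each of T steps searches a vertex maximizing q(v)·b(v) (with the current belief b) minimizes the objective Σ_{t=1}^T Σ_{v} b(v, t) over all length-T search schedules, when each vertex may be searched at most once. -/
import Mathlib


/-- Belief evolution for a stationary target: at step `t` the searched vertex `s t` has its
belief multiplied by `(1 - q (s t))`; all other beliefs are unchanged. -/
def statEvol {V : Type*} [Fintype V] [DecidableEq V]
    (q : V → ℝ) (b0 : V → ℝ) (s : ℕ → V) : ℕ → V → ℝ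
  | 0 => b0
  | t + 1 => fun v =>
      if v = s t then (1 - q (s t)) * statEvol q b0 s t v else statEvol q b0 s t v

lemma statEvol_untouched {V : Type*} [Fintype V] [DecidableEq V]
    (q b0 : V → ℝ) (s : ℕ → V) (t : ℕ) (v : V) (h : ∀ i < t, s i ≠ v) :
    statEvol q b0 s t v = b0 v := by
  induction t with
  | zero => rfl
  | succ t ih =>
    have hv : v ≠ s t := fun hv => h t (Nat.lt_succ_self t) hv.symm
    simp only [statEvol, if_neg hv]
    exact ih (fun i hi => h i (Nat.lt_succ_of_lt hi))

lemma sum_statEvol_succ {V : Type*} [Fintype V] [DecidableEq V]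
    (q b0 : V → ℝ) (s : ℕ → V) (t : ℕ) :
    ∑ v, statEvol q b0 s (t+1) v
      = ∑ v, statEvol q b0 s t v - q (s t) * statEvol q b0 s t (s t) := by
  have key : ∀ v, statEvol q b0 s (t+1) v
      = statEvol q b0 s t v - (if v = s t then q (s t) * statEvol q b0 s t v else 0) := by
    intro v
    by_cases h : v = s t
    · subst h; simp only [statEvol, if_pos rfl, if_pos trivial]; ring
    · simp only [statEvol, if_neg h]; ring
  rw [Finset.sum_congr rfl (fun v _ => key v), Finset.sum_sub_distrib]
  congr 1
  rw [Finset.sum_ite_eq' Finset.univ (s t) (fun v => q (s t) * statEvol q b0 s t v)]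
  simp

lemma sum_statEvol_closed {V : Type*} [Fintype V] [DecidableEq V]
    (q b0 : V → ℝ) (s : ℕ → V) (T : ℕ) (hs : Set.InjOn s (Set.Iio T))
    (t : ℕ) (ht : t < T) :
    ∑ v, statEvol q b0 s (t+1) v
      = ∑ v, b0 v - ∑ i ∈ Finset.range (t+1), q (s i) * b0 (s i) := by
  induction t with
  | zero =>
    rw [sum_statEvol_succ]
    simp [statEvol]
  | succ t ih =>
    have huntouched : statEvol q b0 s (t+1) (s (t+1)) = b0 (s (t+1)) := by
      apply statEvol_untouched
      intro i hi hne
      have : i = t + 1 := hs (Set.mem_Iio.mpr (lt_trans hi ht)) (Set.mem_Iio.mpr ht) hne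
      omega
    rw [sum_statEvol_succ, ih (Nat.lt_of_succ_lt ht), huntouched,
      Finset.sum_range_succ (fun i => q (s i) * b0 (s i)) (t+1)]
    ring

/-- The greedy prefix of length `k` maximizes `∑ w` over all `k`-element subsets. -/
lemma greedy_subset_max {V : Type*} [Fintype V] [DecidableEq V]
    (w : V → ℝ) (T : ℕ) (g : ℕ → V)
    (hg : ∀ t < T, ∀ v, (∀ i < t, g i ≠ v) → w v ≤ w (g t)) :
    ∀ k ≤ T, ∀ S : Finset V, S.card = k →
      ∑ v ∈ S, w v ≤ ∑ i ∈ Finset.range k, w (g i) := by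
  intro k
  induction k with
  | zero => intro _ S hS; simp [Finset.card_eq_zero.mp hS]
  | succ k ih =>
    intro hk S hS
    have hkT : k < T := hk
    obtain ⟨v, hvS, hv⟩ : ∃ v ∈ S, w v ≤ w (g k) := by
      by_cases hgk : g k ∈ S
      · exact ⟨g k, hgk, le_refl _⟩
      · have hGcard : ((Finset.range k).image g).card ≤ k :=
          Finset.card_image_le.trans (by simp)
        have hns : ¬ (S ⊆ (Finset.range k).image g) := by
          intro hsub
          have := Finset.card_le_card hsub
          omega
        obtain ⟨v, hvS, hvG⟩ := Finset.not_subset.mp hns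
        refine ⟨v, hvS, hg k hkT v ?_⟩
        intro i hi hne
        exact hvG (Finset.mem_image.mpr ⟨i, Finset.mem_range.mpr hi, hne⟩)
    have herase : (S.erase v).card = k := by
      rw [Finset.card_erase_of_mem hvS, hS]; omega
    have hih := ih (le_of_lt hkT) (S.erase v) herase
    calc ∑ x ∈ S, w x = ∑ x ∈ S.erase v, w x + w v := by
          rw [Finset.sum_erase_add _ _ hvS]
      _ ≤ ∑ i ∈ Finset.range k, w (g i) + w (g k) := add_le_add hih hv
      _ = ∑ i ∈ Finset.range (k+1), w (g i) := (Finset.sum_range_succ _ _).symm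

/-- Greedy optimality for the fully relaxed stationary search problem: with a stationary
target, multiplicative search updates, no reachability constraint, and each vertex searched
at most once, the schedule `g` that at each of the `T` steps searches a vertex maximizing
`q v * b v` (with respect to the current belief) minimizes the objective
`Σ_{t=1}^T Σ_v b(v,t)` over all length-`T` schedules of distinct vertices. -/
theorem greedy_optimal_relaxed {V : Type*} [Fintype V] [DecidableEq V]
    (q : V → ℝ) (hq : ∀ v, 0 ≤ q v ∧ q v ≤ 1)
    (b0 : V → ℝ) (hb0 : ∀ v, 0 ≤ b0 v)
    (T : ℕ) (g : ℕ → V) (hginj : Set.InjOn g (Set.Iio T))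
    (hgreedy : ∀ t < T, ∀ v : V,
      q v * statEvol q b0 g t v ≤ q (g t) * statEvol q b0 g t (g t)) :
    ∀ s : ℕ → V, Set.InjOn s (Set.Iio T) →
      ∑ t ∈ Finset.range T, ∑ v, statEvol q b0 g (t + 1) v ≤
        ∑ t ∈ Finset.range T, ∑ v, statEvol q b0 s (t + 1) v := by
  intro s hsinj
  -- greedy property in terms of w v = q v * b0 v
  have hgw : ∀ t < T, ∀ v, (∀ i < t, g i ≠ v) →
      q v * b0 v ≤ q (g t) * b0 (g t) := by
    intro t ht v hv
    have h1 : statEvol q b0 g t v = b0 v := statEvol_untouched _ _ _ _ _ hv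
    have h2 : statEvol q b0 g t (g t) = b0 (g t) := by
      apply statEvol_untouched
      intro i hi hne
      have : i = t := hginj (Set.mem_Iio.mpr (lt_trans hi ht)) (Set.mem_Iio.mpr ht) hne
      omega
    have := hgreedy t ht v
    rw [h1, h2] at this
    exact this
  apply Finset.sum_le_sum
  intro t ht
  have ht' : t < T := Finset.mem_range.mp ht
  rw [sum_statEvol_closed q b0 g T hginj t ht', sum_statEvol_closed q b0 s T hsinj t ht']
  have hsub : ∑ i ∈ Finset.range (t+1), q (s i) * b0 (s i)
      ≤ ∑ i ∈ Finset.range (t+1), q (g i) * b0 (g i) := by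
    have hinj : Set.InjOn s ↑(Finset.range (t+1)) := by
      intro a ha b hb hab
      exact hsinj (Set.mem_Iio.mpr (lt_of_lt_of_le (by simpa using ha) ht'))
        (Set.mem_Iio.mpr (lt_of_lt_of_le (by simpa using hb) ht')) hab
    have himg : ∑ i ∈ Finset.range (t+1), q (s i) * b0 (s i)
        = ∑ v ∈ (Finset.range (t+1)).image s, q v * b0 v := by
      rw [Finset.sum_image (fun a ha b hb => hinj ha hb)]
    have hcard : ((Finset.range (t+1)).image s).card = t + 1 := by
      rw [Finset.card_image_of_injOn hinj, Finset.card_range]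
    rw [himg]
    exact greedy_subset_max (fun v => q v * b0 v) T g hgw (t+1) ht' _ hcard
  linarith
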